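/- Let R be a finite commutative ring of order n with identity and G ≤ R^× a subgroup of order e with (G−1)\{0} ⊆ R^×. Then the partition S = {αG : α ∈ R} of R has exactly (n−1)/e + 1 blocks. -/

import Mathlib

open MulAction

/-- The coset partition `S = {αG : α ∈ R}` has exactly `(n-1)/e + 1` blocks,
where `n = |R|` and `e = |G|`. -/
theorem coset_partition_card {R : Type*} [CommRing R] [Fintype R] (G : Subgroup Rˣ)
    (hG : ∀ g ∈ G, ((g : Rˣ) : R) - 1 ≠ 0 → IsUnit (((g : Rˣ) : R) - 1)) :
    Set.ncard {s : Set R | ∃ α : R, s = {x : R | ∃ g ∈ G, x = α * ((g : Rˣ) : R)}} =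
      (Nat.card R - 1) / Nat.card G + 1 := by
  classical
  -- the sets in question are orbits of the G-action on R
  have horb : ∀ α : R, {x : R | ∃ g ∈ G, x = α * ((g : Rˣ) : R)} = orbit G α := by
    intro α
    ext x
    simp only [Set.mem_setOf_eq, MulAction.mem_orbit_iff]
    constructor
    · rintro ⟨g, hg, rfl⟩
      exact ⟨⟨g, hg⟩, by simp [Units.smul_def, mul_comm]⟩
    · rintro ⟨⟨g, hg⟩, rfl⟩
      exact ⟨g, hg, by simp [Units.smul_def, mul_comm]⟩
  have hset : {s : Set R | ∃ α : R, s = {x : R | ∃ g ∈ G, x = α * ((g : Rˣ) : R)}}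
      = Set.range (orbitRel.Quotient.orbit : orbitRel.Quotient G R → Set R) := by
    ext s
    simp only [Set.mem_setOf_eq, Set.mem_range, horb]
    constructor
    · rintro ⟨α, rfl⟩
      exact ⟨⟦α⟧, orbitRel.Quotient.orbit_mk α⟩
    · rintro ⟨ω, rfl⟩
      refine ⟨ω.out, ?_⟩
      exact orbitRel.Quotient.orbit_eq_orbit_out ω Quotient.out_eq'
  rw [hset, ← Nat.card_coe_set_eq,
    Nat.card_range_of_injective orbitRel.Quotient.orbit_injective]
  -- now count the orbits
  -- orbit of a nonzero element has cardinality |G|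
  have hcard : ∀ α : R, α ≠ 0 → Nat.card (orbit G α) = Nat.card G := by
    intro α hα
    have hinj : Function.Injective (fun g : G => g • α) := by
      intro g h hgh
      simp only [Units.smul_def, Subgroup.smul_def] at hgh
      -- hgh : ↑↑g * α = ↑↑h * α
      set u : Rˣ := ((g * h⁻¹ : G) : Rˣ) with hu
      have huh : u * (h : Rˣ) = (g : Rˣ) := by
        rw [hu]; push_cast; group
      have e2 : (u : R) * α = α := by
        apply (Units.isUnit (h : Rˣ)).mul_left_cancel
        calc ((h : Rˣ) : R) * ((u : R) * α) = ((u * (h : Rˣ) : Rˣ) : R) * α := by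
              push_cast; ring
          _ = ((g : Rˣ) : R) * α := by rw [huh]
          _ = ((h : Rˣ) : R) * α := hgh
      have h0 : ((u : R) - 1) * α = 0 := by rw [sub_mul, one_mul, e2, sub_self]
      have key : (u : R) - 1 = 0 := by
        by_contra hne
        exact hα ((hG _ (g * h⁻¹).2 hne).mul_right_eq_zero.mp h0)
      have hu1 : u = 1 := Units.ext (by simpa [sub_eq_zero] using key)
      have : (g * h⁻¹ : G) = 1 := by exact OneMemClass.coe_eq_one.mp hu1
      exact mul_inv_eq_one.mp this
    have : orbit G α = Set.range (fun g : G => g • α) := rfl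
    rw [this, Nat.card_range_of_injective hinj]
  -- orbit of zero is {0}
  have hzero : orbit G (0 : R) = {0} := by
    ext x
    simp [MulAction.mem_orbit_iff, smul_zero, eq_comm]
  haveI : Fintype (orbitRel.Quotient G R) := Fintype.ofFinite _
  set Q := orbitRel.Quotient G R
  set z : Q := ⟦(0 : R)⟧
  have horbz : z.orbit = {(0 : R)} := by
    rw [show z.orbit = orbit G (0 : R) from orbitRel.Quotient.orbit_mk 0, hzero]
  have hsum : Nat.card R = ∑ ω : Q, Nat.card ω.orbit := by
    rw [Nat.card_congr (selfEquivSigmaOrbits' G R)]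
    rw [Nat.card_eq_fintype_card, Fintype.card_sigma]
    simp [Nat.card_eq_fintype_card]
    rfl
  have hne : ∀ ω : Q, ω ≠ z → Nat.card ω.orbit = Nat.card G := by
    intro ω hω
    rw [orbitRel.Quotient.orbit_eq_orbit_out ω Quotient.out_eq']
    apply hcard
    intro h0
    apply hω
    rw [← ω.out_eq, h0]
  have hsum2 : Nat.card R = Nat.card G * (Fintype.card Q - 1) + 1 := by
    rw [hsum, ← Finset.sum_erase_add _ _ (Finset.mem_univ z)]
    rw [Finset.sum_congr rfl (fun ω hω => hne ω (Finset.ne_of_mem_erase hω))]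
    rw [Finset.sum_const, Finset.card_erase_of_mem (Finset.mem_univ z), Finset.card_univ]
    simp [horbz, mul_comm]
  have hGpos : 0 < Nat.card G := Nat.card_pos
  haveI : Nonempty Q := ⟨z⟩
  have hQpos : 0 < Fintype.card Q := Fintype.card_pos
  rw [Nat.card_eq_fintype_card, hsum2]
  rw [Nat.add_sub_cancel, Nat.mul_div_cancel_left _ hGpos]
  omega
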